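/- (Consistency check succeeds for late start times) Under the chain setup, if the declared composed skew differs from the true one, a_{n,1} − â_{n,1} > 0, then for any delay bound K > 0 there exists a threshold T₀ (explicitly T₀ := (n·K·â_{n,i*} + b̂_{n,1} − b_{n,1})/(a_{n,1} − â_{n,1})) such that if node 1 initiates the timing packet at a time τ^{1,r} = τ^1(t₁) > T₀, then for any time-stamps satisfying parameter consistency and causality, some intermediate node j ∈ {2,…,n−1} must have forwarding delay τ^{j,r} − τ^{j,l} > K. -/

import Mathlib

/-- Consistency check succeeds for late start times: if the
declared composed skew differs from the true one, a_{n,1} − â_{n,1} > 0, then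
for K > 0 and threshold T₀ := (n·K·â_{n,i*} + b̂_{n,1} − b_{n,1})/(a_{n,1} − â_{n,1}),
whenever node 1 initiates its timing packet at time r 1 > T₀, any time-stamps
satisfying parameter consistency and causality must have some intermediate
node j ∈ {2,…,n−1} with forwarding delay r j − l j > K. -/
theorem stmt10 (n : ℕ) (hn : 2 ≤ n) (ahat bhat l r : ℕ → ℝ) (a_n1 b_n1 K : ℝ)
    (hahat : ∀ i ∈ Finset.Icc 2 n, 0 < ahat i)
    (istar : ℕ) (histar : istar ∈ Finset.Icc 2 n)
    (hmin : ∀ k ∈ Finset.Icc 1 n,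
      (∏ i ∈ Finset.Icc 2 istar, ahat i) ≤ ∏ i ∈ Finset.Icc 2 k, ahat i)
    (hle1 : (∏ i ∈ Finset.Icc 2 istar, ahat i) ≤ 1)
    (hcons : ∀ j ∈ Finset.Icc 2 n, l j = ahat j * r (j - 1) + bhat j)
    (hcaus : ∀ j, l j ≤ r j)
    (ha : 0 < a_n1)
    (hrecv : a_n1 * r 1 + b_n1 ≤ l n)
    (hK : 0 < K)
    (hgap : 0 < a_n1 - ∏ i ∈ Finset.Icc 2 n, ahat i)
    (hlate : r 1 >
      ((n : ℝ) * K * ((∏ i ∈ Finset.Icc 2 n, ahat i) / (∏ i ∈ Finset.Icc 2 istar, ahat i))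
        + (∑ j ∈ Finset.Icc 2 n, (∏ k ∈ Finset.Icc (j + 1) n, ahat k) * bhat j)
        - b_n1)
      / (a_n1 - ∏ i ∈ Finset.Icc 2 n, ahat i)) :
    ∃ j ∈ Finset.Icc 2 (n - 1), r j - l j > K := by
  by_contra hcon
  push_neg at hcon
  -- all intermediate delays ≤ K
  have hPpos : ∀ s t : ℕ, (0:ℝ) < ∏ i ∈ Finset.Icc s t, ahat i → True := fun _ _ _ => trivial
  have hposIcc : ∀ s t : ℕ, 2 ≤ s → t ≤ n → (0:ℝ) < ∏ i ∈ Finset.Icc s t, ahat i := by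
    intro s t hs ht
    apply Finset.prod_pos
    intro i hi
    rw [Finset.mem_Icc] at hi
    exact hahat i (Finset.mem_Icc.2 ⟨le_trans hs hi.1, le_trans hi.2 ht⟩)
  have key : ∀ m, 1 ≤ m → m ≤ n - 1 →
      r m ≤ (∏ i ∈ Finset.Icc 2 m, ahat i) * r 1
        + ∑ j ∈ Finset.Icc 2 m, (∏ k ∈ Finset.Icc (j+1) m, ahat k) * (bhat j + K) := by
    intro m hm1
    induction m, hm1 using Nat.le_induction with
    | base => intro _; simp
    | succ m hm ih =>
      intro hmn
      have ihm := ih (by omega)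
      have hmem : m + 1 ∈ Finset.Icc 2 n := Finset.mem_Icc.2 (by omega)
      have hd : r (m+1) - l (m+1) ≤ K := hcon (m+1) (Finset.mem_Icc.2 (by omega))
      have hl : l (m+1) = ahat (m+1) * r ((m+1)-1) + bhat (m+1) := hcons (m+1) hmem
      simp only [Nat.add_sub_cancel] at hl
      have hap : 0 < ahat (m+1) := hahat (m+1) hmem
      have h1 : r (m+1) ≤ ahat (m+1) * r m + (bhat (m+1) + K) := by
        rw [hl] at hd; linarith
      have h2 : ahat (m+1) * r m ≤ ahat (m+1) * ((∏ i ∈ Finset.Icc 2 m, ahat i) * r 1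
          + ∑ j ∈ Finset.Icc 2 m, (∏ k ∈ Finset.Icc (j+1) m, ahat k) * (bhat j + K)) :=
        mul_le_mul_of_nonneg_left ihm hap.le
      have hprod : ∏ i ∈ Finset.Icc 2 (m+1), ahat i
          = (∏ i ∈ Finset.Icc 2 m, ahat i) * ahat (m+1) :=
        Finset.prod_Icc_succ_top (by omega) _
      have hsum : ∑ j ∈ Finset.Icc 2 (m+1), (∏ k ∈ Finset.Icc (j+1) (m+1), ahat k) * (bhat j + K)
          = (∑ j ∈ Finset.Icc 2 m, ahat (m+1) * ((∏ k ∈ Finset.Icc (j+1) m, ahat k) * (bhat j + K)))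
            + (bhat (m+1) + K) := by
        rw [Finset.sum_Icc_succ_top (by omega : 2 ≤ m + 1)]
        congr 1
        · apply Finset.sum_congr rfl
          intro j hj
          rw [Finset.mem_Icc] at hj
          rw [Finset.prod_Icc_succ_top (by omega : j + 1 ≤ m + 1)]
          ring
        · simp
      rw [hprod, hsum, ← Finset.mul_sum]
      calc r (m+1) ≤ ahat (m+1) * r m + (bhat (m+1) + K) := h1
        _ ≤ ahat (m+1) * ((∏ i ∈ Finset.Icc 2 m, ahat i) * r 1
              + ∑ j ∈ Finset.Icc 2 m, (∏ k ∈ Finset.Icc (j+1) m, ahat k) * (bhat j + K))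
            + (bhat (m+1) + K) := by linarith
        _ = _ := by ring
  -- apply at m = n - 1
  have hkey := key (n-1) (by omega) (le_refl _)
  have hnn : n - 1 + 1 = n := by omega
  have hl : l n = ahat n * r (n-1) + bhat n := hcons n (Finset.mem_Icc.2 ⟨hn, le_refl n⟩)
  have hap : 0 < ahat n := hahat n (Finset.mem_Icc.2 ⟨hn, le_refl n⟩)
  have hln : l n ≤ (∏ i ∈ Finset.Icc 2 n, ahat i) * r 1
      + (∑ j ∈ Finset.Icc 2 (n-1), (∏ k ∈ Finset.Icc (j+1) n, ahat k) * (bhat j + K))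
      + bhat n := by
    have h2 := mul_le_mul_of_nonneg_left hkey hap.le
    have hprod : (∏ i ∈ Finset.Icc 2 n, ahat i)
        = (∏ i ∈ Finset.Icc 2 (n-1), ahat i) * ahat n := by
      conv_lhs => rw [← hnn]
      rw [Finset.prod_Icc_succ_top (by omega : 2 ≤ n - 1 + 1) ahat, hnn]
    have hsum : ∀ j ∈ Finset.Icc 2 (n-1),
        (∏ k ∈ Finset.Icc (j+1) n, ahat k)
          = (∏ k ∈ Finset.Icc (j+1) (n-1), ahat k) * ahat n := by
      intro j hj
      rw [Finset.mem_Icc] at hj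
      conv_lhs => rw [← hnn]
      rw [Finset.prod_Icc_succ_top (by omega : j + 1 ≤ n - 1 + 1) ahat, hnn]
    rw [hl, hprod]
    rw [Finset.sum_congr rfl fun j hj => by rw [hsum j hj]]
    have heq : ahat n * ((∏ i ∈ Finset.Icc 2 (n-1), ahat i) * r 1
          + ∑ j ∈ Finset.Icc 2 (n-1), (∏ k ∈ Finset.Icc (j+1) (n-1), ahat k) * (bhat j + K))
        = (∏ i ∈ Finset.Icc 2 (n-1), ahat i) * ahat n * r 1
          + ∑ j ∈ Finset.Icc 2 (n-1), (∏ k ∈ Finset.Icc (j+1) (n-1), ahat k) * ahat n * (bhat j + K) := by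
      rw [mul_add, Finset.mul_sum]
      congr 1
      · ring
      · exact Finset.sum_congr rfl fun j _ => by ring
    have h3 := h2.trans_eq heq
    linarith
  -- split off bhat terms
  set Pn := ∏ i ∈ Finset.Icc 2 n, ahat i with hPn
  set Ps := ∏ i ∈ Finset.Icc 2 istar, ahat i with hPs
  have hPspos : 0 < Ps := by
    rw [Finset.mem_Icc] at histar
    exact hposIcc 2 istar (le_refl _) histar.2
  have hPnpos : 0 < Pn := hposIcc 2 n (le_refl _) (le_refl _)
  have hB : ∑ j ∈ Finset.Icc 2 n, (∏ k ∈ Finset.Icc (j + 1) n, ahat k) * bhat j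
      = (∑ j ∈ Finset.Icc 2 (n-1), (∏ k ∈ Finset.Icc (j+1) n, ahat k) * bhat j) + bhat n := by
    conv_lhs => rw [← hnn]
    rw [Finset.sum_Icc_succ_top (by omega : 2 ≤ n - 1 + 1), hnn]
    congr 1
    have : Finset.Icc (n-1+1+1) (n-1+1) = ∅ := by
      rw [Finset.Icc_eq_empty_iff]; omega
    rw [hnn] at this
    rw [this, Finset.prod_empty, one_mul]
  -- bound each tail product by Pn / Ps
  have htail : ∀ j ∈ Finset.Icc 2 (n-1),
      (∏ k ∈ Finset.Icc (j+1) n, ahat k) ≤ Pn / Ps := by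
    intro j hj
    rw [Finset.mem_Icc] at hj
    have hsplit : (∏ i ∈ Finset.Icc 2 j, ahat i) * (∏ k ∈ Finset.Icc (j+1) n, ahat k) = Pn := by
      have h1 : Finset.Icc 2 j = Finset.Ioc 1 j := by rw [← Finset.Icc_add_one_left_eq_Ioc]; rfl
      have h2 : Finset.Icc (j+1) n = Finset.Ioc j n := by rw [← Finset.Icc_add_one_left_eq_Ioc]
      have h3 : Finset.Icc 2 n = Finset.Ioc 1 n := by rw [← Finset.Icc_add_one_left_eq_Ioc]; rfl
      rw [hPn, h1, h2, h3]
      exact Finset.prod_Ioc_consecutive _ (by omega) (by omega)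
    have hmj : Ps ≤ ∏ i ∈ Finset.Icc 2 j, ahat i :=
      hmin j (Finset.mem_Icc.2 (by omega))
    have htp : 0 < ∏ k ∈ Finset.Icc (j+1) n, ahat k := by
      by_cases hjn : j + 1 ≤ n
      · exact hposIcc (j+1) n (by omega) (le_refl _)
      · rw [Finset.Icc_eq_empty (by omega), Finset.prod_empty]; norm_num
    rw [le_div_iff₀ hPspos]
    calc (∏ k ∈ Finset.Icc (j+1) n, ahat k) * Ps
        ≤ (∏ k ∈ Finset.Icc (j+1) n, ahat k) * (∏ i ∈ Finset.Icc 2 j, ahat i) :=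
          mul_le_mul_of_nonneg_left hmj htp.le
      _ = Pn := by rw [mul_comm]; exact hsplit
  -- bound the K-sum
  have hKsum : ∑ j ∈ Finset.Icc 2 (n-1), (∏ k ∈ Finset.Icc (j+1) n, ahat k) * K
      ≤ (n : ℝ) * K * (Pn / Ps) := by
    have hcard : (Finset.Icc 2 (n-1)).card = n - 2 := by
      rw [Nat.card_Icc]; omega
    have hbound : ∀ j ∈ Finset.Icc 2 (n-1),
        (∏ k ∈ Finset.Icc (j+1) n, ahat k) * K ≤ (Pn / Ps) * K := by
      intro j hj
      exact mul_le_mul_of_nonneg_right (htail j hj) hK.le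
    calc ∑ j ∈ Finset.Icc 2 (n-1), (∏ k ∈ Finset.Icc (j+1) n, ahat k) * K
        ≤ (Finset.Icc 2 (n-1)).card • ((Pn / Ps) * K) :=
          Finset.sum_le_card_nsmul _ _ _ hbound
      _ = ((n - 2 : ℕ) : ℝ) * ((Pn / Ps) * K) := by rw [hcard, nsmul_eq_mul]
      _ ≤ (n : ℝ) * ((Pn / Ps) * K) := by
          apply mul_le_mul_of_nonneg_right
          · exact_mod_cast Nat.cast_le.2 (by omega : n - 2 ≤ n)
          · positivity
      _ = (n : ℝ) * K * (Pn / Ps) := by ring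
  -- assemble
  have hsplit2 : ∑ j ∈ Finset.Icc 2 (n-1), (∏ k ∈ Finset.Icc (j+1) n, ahat k) * (bhat j + K)
      = (∑ j ∈ Finset.Icc 2 (n-1), (∏ k ∈ Finset.Icc (j+1) n, ahat k) * bhat j)
        + ∑ j ∈ Finset.Icc 2 (n-1), (∏ k ∈ Finset.Icc (j+1) n, ahat k) * K := by
    rw [← Finset.sum_add_distrib]
    apply Finset.sum_congr rfl
    intro j _; ring
  rw [hsplit2] at hln
  have hfinal : a_n1 * r 1 + b_n1 ≤ Pn * r 1
      + (∑ j ∈ Finset.Icc 2 n, (∏ k ∈ Finset.Icc (j + 1) n, ahat k) * bhat j)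
      + (n : ℝ) * K * (Pn / Ps) := by
    rw [hB]
    calc a_n1 * r 1 + b_n1 ≤ l n := hrecv
      _ ≤ Pn * r 1
          + ((∑ j ∈ Finset.Icc 2 (n-1), (∏ k ∈ Finset.Icc (j+1) n, ahat k) * bhat j)
            + ∑ j ∈ Finset.Icc 2 (n-1), (∏ k ∈ Finset.Icc (j+1) n, ahat k) * K)
          + bhat n := hln
      _ ≤ _ := by linarith [hKsum]
  rw [gt_iff_lt, div_lt_iff₀ hgap] at hlate
  nlinarith [hlate, hfinal]
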